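/- Let Λ be a local Artinian algebra with J(Λ)² = 0 and M a finitely generated indecomposable Λ-module. If M is torsionless and Ext¹_Λ(M, M) = 0, then M is projective. -/

import Mathlib

open CategoryTheory

universe u

noncomputable abbrev ExtGrp (Λ : Type u) [Ring Λ] (M N : ModuleCat.{u} Λ) (n : ℕ) :
    Type u :=
  ((Ext ℤ (ModuleCat.{u} Λ) n).obj (Opposite.op M)).obj N

/-- `M` is indecomposable: nonzero and admits no nontrivial direct sum decomposition. -/
def IsIndecomposableModule (Λ : Type u) [Ring Λ] (M : Type u) [AddCommGroup M]
    [Module Λ M] : Prop :=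
  Nontrivial M ∧ ∀ A B : Submodule Λ M, IsCompl A B → A = ⊥ ∨ B = ⊥

/-- `M` is torsionless: it embeds into a finitely generated free module. -/
def IsTorsionless (Λ : Type u) [Ring Λ] (M : Type u) [AddCommGroup M]
    [Module Λ M] : Prop :=
  ∃ (n : ℕ) (f : M →ₗ[Λ] (Fin n → Λ)), Function.Injective f

section LocalRing

variable {Λ : Type*} [Ring Λ] [IsLocalRing Λ]

lemma aux_isUnit_of_mul {b x : Λ} (h : IsUnit (b * x)) : IsUnit x := by
  obtain ⟨u, hu⟩ := h
  have hkx : ((u⁻¹ : Λˣ) : Λ) * b * x = 1 := by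
    rw [mul_assoc, ← hu]; exact u.inv_mul
  set k := ((u⁻¹ : Λˣ) : Λ) * b with hk
  rcases IsLocalRing.isUnit_or_isUnit_of_add_one
      (a := x * k) (b := 1 - x * k) (by abel) with h1 | h2
  · -- x*k is a unit idempotent, hence 1
    have hidem : (x * k) * (x * k) = (x * k) * 1 := by
      rw [mul_one, mul_assoc, ← mul_assoc k x, hkx, one_mul]
    have hxk : x * k = 1 := h1.mul_left_cancel hidem
    exact ⟨⟨x, k, hxk, hkx⟩, rfl⟩
  · exfalso
    have h0 : (1 - x * k) * x = (1 - x * k) * 0 := by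
      rw [mul_zero, sub_mul, one_mul, mul_assoc, hkx, mul_one, sub_self]
    have hx0 : x = 0 := h2.mul_left_cancel h0
    rw [hx0, mul_zero] at hkx
    exact zero_ne_one hkx

lemma aux_mem_jacobson {x : Λ} (hx : ¬IsUnit x) : x ∈ (⊥ : Ideal Λ).jacobson := by
  rw [Ideal.jacobson]
  refine Submodule.mem_sInf.2 ?_
  rintro I ⟨-, hI⟩
  by_contra hxI
  have hlt : I < I ⊔ Submodule.span Λ {x} :=
    lt_of_le_of_ne le_sup_left fun h =>
      hxI (h ▸ Submodule.mem_sup_right (Submodule.mem_span_singleton_self x))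
  have htop : I ⊔ Submodule.span Λ {x} = ⊤ := hI.out.2 _ hlt
  have h1 : (1 : Λ) ∈ I ⊔ Submodule.span Λ {x} := htop ▸ Submodule.mem_top
  obtain ⟨y, hy, t, ht, hyt⟩ := Submodule.mem_sup.1 h1
  obtain ⟨c, hc⟩ := Submodule.mem_span_singleton.1 ht
  rcases IsLocalRing.isUnit_or_isUnit_of_add_one hyt with hU | hU
  · exact hI.ne_top (Ideal.eq_top_of_isUnit_mem I hy hU)
  · rw [← hc] at hU
    exact hx (aux_isUnit_of_mul (by rwa [smul_eq_mul] at hU))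

end LocalRing

section Functional

variable {Λ : Type u} [Ring Λ] [IsLocalRing Λ]

lemma aux_span_drop {M : Type u} [AddCommGroup M] [Module Λ M]
    {n : ℕ} (m : Fin (n + 1) → M) (hm : Submodule.span Λ (Set.range m) = ⊤)
    {x : Fin (n + 1) → Λ} (hx : ∑ i, x i • m i = 0) {j : Fin (n + 1)}
    (hj : IsUnit (x j)) :
    Submodule.span Λ (Set.range (m ∘ j.succAbove)) = ⊤ := by
  have hmem : m j ∈ Submodule.span Λ (Set.range (m ∘ j.succAbove)) := by
    have hsum := Fin.sum_univ_succAbove (fun i => x i • m i) j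
    rw [hx] at hsum
    have hxj : x j • m j = -∑ i : Fin n, x (j.succAbove i) • m (j.succAbove i) := by
      rw [eq_neg_iff_add_eq_zero]
      exact hsum.symm
    have hmj : m j = (↑hj.unit⁻¹ : Λ) • (x j • m j) := by
      rw [smul_smul, hj.val_inv_mul, one_smul]
    rw [hmj, hxj]
    refine Submodule.smul_mem _ _ (Submodule.neg_mem _ (Submodule.sum_mem _ fun i _ => ?_))
    exact Submodule.smul_mem _ _ (Submodule.subset_span ⟨i, rfl⟩)
  rw [eq_top_iff, ← hm, Submodule.span_le]
  rintro - ⟨i, rfl⟩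
  by_cases hij : i = j
  · subst hij; exact hmem
  · obtain ⟨k, hk⟩ := Fin.exists_succAbove_eq hij
    exact Submodule.subset_span ⟨k, by simp [hk]⟩

lemma aux_exists_functional {N M : Type u} [AddCommGroup N] [Module Λ N]
    [AddCommGroup M] [Module Λ M] [IsNoetherian Λ N]
    (hN : ∀ a : Λ, ¬IsUnit a → ∀ x : N, a • x = 0)
    (hM : ∀ a : Λ, ¬IsUnit a → ∀ x : M, a • x = 0)
    (v : N) (hv : v ≠ 0) (m₀ : M) :
    ∃ ψ : N →ₗ[Λ] M, ψ v = m₀ := by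
  classical
  set θ := LinearMap.toSpanSingleton Λ N v with hθ
  set S := LinearMap.range θ with hS
  obtain ⟨W, hWdisj, hWmax⟩ :=
    (set_has_maximal_iff_noetherian.2 ‹IsNoetherian Λ N›)
      {W : Submodule Λ N | Disjoint S W} ⟨⊥, disjoint_bot_right⟩
  have hcompl : IsCompl S W := by
    refine ⟨hWdisj, codisjoint_iff.2 ?_⟩
    by_contra hne
    obtain ⟨x, hx⟩ : ∃ x : N, x ∉ S ⊔ W := by
      by_contra h; push_neg at h
      exact hne (Submodule.eq_top_iff'.2 h)
    have hxW : x ∉ W := fun h => hx (Submodule.mem_sup_right h)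
    set W' := W ⊔ LinearMap.range (LinearMap.toSpanSingleton Λ N x) with hW'def
    have hxW' : x ∈ W' :=
      Submodule.mem_sup_right ⟨1, one_smul _ _⟩
    have hWW' : W < W' := lt_of_le_of_ne le_sup_left fun h => hxW (h ▸ hxW')
    have hW' : ¬Disjoint S W' := fun hd => hWmax W' hd hWW'
    rw [Submodule.disjoint_def] at hW'
    push_neg at hW'
    obtain ⟨z, hzS, hzW', hz0⟩ := hW'
    obtain ⟨w, hw, t, ht, hwt⟩ := Submodule.mem_sup.1 hzW'
    obtain ⟨c, hc⟩ := ht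
    by_cases hcU : IsUnit c
    · apply hx
      have hc' : t = c • x := by rw [← hc, LinearMap.toSpanSingleton_apply]
      have hzw : z - w = c • x := by rw [← hwt, hc']; abel
      have hxe : x = (↑hcU.unit⁻¹ : Λ) • (z - w) := by
        rw [hzw, smul_smul, hcU.val_inv_mul, one_smul]
      rw [hxe]
      exact Submodule.smul_mem _ _
        (Submodule.sub_mem _ (Submodule.mem_sup_left hzS) (Submodule.mem_sup_right hw))
    · have ht0 : t = 0 := by rw [← hc]; exact hN c hcU x
      refine hz0 (hWdisj.eq_bot ▸ ?_ : z ∈ (⊥ : Submodule Λ N))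
      exact ⟨hzS, by rw [← hwt, ht0, add_zero]; exact hw⟩
  have hker : LinearMap.ker θ ≤ LinearMap.ker (LinearMap.toSpanSingleton Λ M m₀) := by
    intro c hc
    rw [LinearMap.mem_ker] at hc ⊢
    rw [LinearMap.toSpanSingleton_apply]
    by_cases hcU : IsUnit c
    · exfalso
      apply hv
      have hcv : c • v = 0 := hc
      have : v = (↑hcU.unit⁻¹ : Λ) • (c • v) := by
        rw [smul_smul, hcU.val_inv_mul, one_smul]
      rw [this, hcv, smul_zero]
    · exact hM c hcU m₀
  set μ := Submodule.liftQ (LinearMap.ker θ) (LinearMap.toSpanSingleton Λ M m₀) hker with hμ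
  set e := θ.quotKerEquivRange with he
  refine ⟨μ ∘ₗ e.symm.toLinearMap ∘ₗ (S.linearProjOfIsCompl W hcompl), ?_⟩
  have hvS : v ∈ S := ⟨1, one_smul _ _⟩
  have h1 : S.linearProjOfIsCompl W hcompl v = ⟨v, hvS⟩ :=
    Submodule.linearProjOfIsCompl_apply_left hcompl ⟨v, hvS⟩
  have h2 : e.symm ⟨v, hvS⟩ = Submodule.Quotient.mk 1 := by
    rw [LinearEquiv.symm_apply_eq]
    apply Subtype.ext
    rw [he, LinearMap.quotKerEquivRange_apply_mk]
    exact (one_smul Λ v).symm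
  simp only [LinearMap.comp_apply, h1, h2, LinearEquiv.coe_toLinearMap, hμ,
    Submodule.liftQ_apply, LinearMap.toSpanSingleton_apply, one_smul]

end Functional

section Res

open CategoryTheory.Limits CategoryTheory.Projective

variable {C : Type*} [Category C] [Abelian C] [EnoughProjectives C]

/-- The complex underlying a projective resolution built from a chosen start. -/
noncomputable def ofEpiComplex {P₀ P₁ : C} (g : P₁ ⟶ P₀) : ChainComplex C ℕ :=
  ChainComplex.mk' P₀ P₁ g (fun f => ⟨syzygies f, d f, (Category.assoc _ _ _).trans ((congrArg _ (kernel.condition f)).trans comp_zero)⟩)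

lemma ofEpiComplex_d_1_0 {P₀ P₁ : C} (g : P₁ ⟶ P₀) :
    (ofEpiComplex g).d 1 0 = g := by
  simp [ofEpiComplex]

lemma aux_exact_congr {X₁ X₂ X₃ : C} {f f' : X₁ ⟶ X₂} {g g' : X₂ ⟶ X₃}
    (w' : f' ≫ g' = 0) (hf : f' = f) (hg : g' = g)
    (h : (ShortComplex.mk f g (hf ▸ hg ▸ w')).Exact) : (ShortComplex.mk f' g' w').Exact := by
  subst hf hg; exact h

lemma ofEpiComplex_exactAt_succ {P₀ P₁ : C} (g : P₁ ⟶ P₀) (n : ℕ) :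
    (ofEpiComplex g).ExactAt (n + 1) := by
  rw [HomologicalComplex.exactAt_iff' _ (n + 1 + 1) (n + 1) n (by simp) (by simp)]
  dsimp [ofEpiComplex, HomologicalComplex.sc', HomologicalComplex.shortComplexFunctor',
      ChainComplex.mk', ChainComplex.mk]
  refine aux_exact_congr _ (ChainComplex.of_d _ _ _) (ChainComplex.of_d _ _ _) ?_
  match n with
  | 0 => apply CategoryTheory.exact_d_f
  | n + 1 => apply CategoryTheory.exact_d_f

instance ofEpiComplex_projective {P₀ P₁ : C} (g : P₁ ⟶ P₀)
    [CategoryTheory.Projective P₀] [CategoryTheory.Projective P₁] (n : ℕ) :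
    CategoryTheory.Projective ((ofEpiComplex g).X n) := by
  obtain (_ | _ | _ | n) := n
  · exact ‹CategoryTheory.Projective P₀›
  · exact ‹CategoryTheory.Projective P₁›
  · apply Projective.projective_over
  · apply Projective.projective_over

/-- A projective resolution from a chosen two-step start. -/
noncomputable def resolutionOfEpi {Z P₀ P₁ : C} (f : P₀ ⟶ Z) (g : P₁ ⟶ P₀)
    [CategoryTheory.Projective P₀] [CategoryTheory.Projective P₁] [Epi f]
    (w : g ≫ f = 0) (hex : (ShortComplex.mk g f w).Exact) :
    CategoryTheory.ProjectiveResolution Z where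
  complex := ofEpiComplex g
  π := (ChainComplex.toSingle₀Equiv _ _).symm ⟨f, by
          rw [ofEpiComplex_d_1_0]; exact w⟩
  quasiIso := ⟨fun n => by
    cases n with
    | zero =>
      rw [ChainComplex.quasiIsoAt₀_iff, ShortComplex.quasiIso_iff_of_zeros']
      · refine (ShortComplex.exact_and_epi_g_iff_of_iso ?_).2 ⟨hex, by dsimp; infer_instance⟩
        exact ShortComplex.isoMk (Iso.refl _) (Iso.refl _) (Iso.refl _)
          (by erw [Category.id_comp, Category.comp_id]; exact (ofEpiComplex_d_1_0 g).symm) (by erw [Category.id_comp, Category.comp_id]; exact (ChainComplex.toSingle₀Equiv_symm_apply_f_zero (C := ofEpiComplex g) (X := Z) _ _).symm)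
      all_goals rfl
    | succ n =>
      rw [quasiIsoAt_iff_exactAt']
      · apply ofEpiComplex_exactAt_succ
      · apply ChainComplex.exactAt_succ_single_obj⟩

end Res

section ExtLift

open CategoryTheory.Limits

lemma ext1_lift {Λ : Type u} [Ring Λ] {M : Type u} [AddCommGroup M] [Module Λ M]
    {n₀ n₁ : ℕ} (π : (Fin n₀ → Λ) →ₗ[Λ] M) (hπ : Function.Surjective π)
    (ρ : (Fin n₁ → Λ) →ₗ[Λ] ↥(LinearMap.ker π)) (hρ : Function.Surjective ρ)
    (hext : Subsingleton (ExtGrp Λ (ModuleCat.of Λ M) (ModuleCat.of Λ M) 1))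
    (ψ : ↥(LinearMap.ker π) →ₗ[Λ] M) :
    ∃ F : (Fin n₀ → Λ) →ₗ[Λ] M, ∀ x : ↥(LinearMap.ker π), F ↑x = ψ x := by
  classical
  set MM := ModuleCat.of Λ M with hMM
  set X₀ := ModuleCat.of Λ (Fin n₀ → Λ) with hX₀
  set X₁ := ModuleCat.of Λ (Fin n₁ → Λ) with hX₁
  set NN := ModuleCat.of Λ ↥(LinearMap.ker π) with hNN
  haveI : CategoryTheory.Projective X₀ :=
    ModuleCat.projective_of_free (Pi.basisFun Λ (Fin n₀))
  haveI : CategoryTheory.Projective X₁ :=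
    ModuleCat.projective_of_free (Pi.basisFun Λ (Fin n₁))
  let ιc : NN ⟶ X₀ := ModuleCat.ofHom (LinearMap.ker π).subtype
  let ρc : X₁ ⟶ NN := ModuleCat.ofHom ρ
  let fc : X₀ ⟶ MM := ModuleCat.ofHom π
  let gc : X₁ ⟶ X₀ := ModuleCat.ofHom ((LinearMap.ker π).subtype ∘ₗ ρ)
  haveI : Epi fc := (ModuleCat.epi_iff_surjective _).2 hπ
  have w : gc ≫ fc = 0 := by
    refine ModuleCat.hom_ext (LinearMap.ext fun y => ?_)
    exact (ρ y).2
  have hex : (ShortComplex.mk gc fc w).Exact := by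
    rw [ShortComplex.moduleCat_exact_iff]
    intro x hx
    obtain ⟨y, hy⟩ := hρ ⟨x, hx⟩
    refine ⟨y, ?_⟩
    show ((ρ y : ↥(LinearMap.ker π)) : Fin n₀ → Λ) = x
    rw [hy]
  let res := resolutionOfEpi fc gc w hex
  -- transfer the subsingleton hypothesis to the homology of the Yoneda complex
  let e := res.isoExt (R := ℤ) 1 MM
  have hzero : IsZero ((res.complex.linearYonedaObj ℤ MM).homology 1) := by
    haveI := hext
    exact (ModuleCat.isZero_of_subsingleton _).of_iso e.symm
  have hexact : (res.complex.linearYonedaObj ℤ MM).ExactAt 1 :=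
    ((res.complex.linearYonedaObj ℤ MM).exactAt_iff_isZero_homology 1).2 hzero
  rw [HomologicalComplex.exactAt_iff' _ 0 1 2 (by simp) (by simp)] at hexact
  rw [ShortComplex.moduleCat_exact_iff] at hexact
  -- the cocycle
  let g₀ : res.complex.X 1 ⟶ MM := ModuleCat.ofHom (ψ ∘ₗ ρ)
  have hcocycle : ((res.complex.linearYonedaObj ℤ MM).sc' 0 1 2).g g₀ = 0 := by
    have h1 : res.complex.d 2 1 ≫ ρc = 0 := by
      have h2 : (res.complex.d 2 1 ≫ ρc) ≫ ιc = 0 := by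
        have : ρc ≫ ιc = res.complex.d 1 0 := (ofEpiComplex_d_1_0 gc).symm
        exact (CategoryTheory.Category.assoc _ _ _).trans ((congrArg (fun k => res.complex.d 2 1 ≫ k) this).trans (HomologicalComplex.d_comp_d _ _ _ _))
      haveI : CategoryTheory.Mono ιc :=
        (ModuleCat.mono_iff_injective _).2 (Submodule.injective_subtype _)
      exact (CategoryTheory.cancel_mono ιc).1 (by rw [h2, CategoryTheory.Limits.zero_comp])
    have : g₀ = ρc ≫ (ModuleCat.ofHom ψ : NN ⟶ MM) := rfl
    show res.complex.d 2 1 ≫ g₀ = 0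
    rw [this]; exact (CategoryTheory.Category.assoc _ _ _).symm.trans (by rw [h1, CategoryTheory.Limits.zero_comp])
  obtain ⟨F, hF⟩ := hexact g₀ hcocycle
  let F' : res.complex.X 0 ⟶ MM := F
  have hF' : res.complex.d 1 0 ≫ F' = g₀ := hF
  have hd10 : res.complex.d 1 0 = gc := ofEpiComplex_d_1_0 gc
  let F'' : (Fin n₀ → Λ) →ₗ[Λ] M := F'.hom
  refine ⟨F'', fun x => ?_⟩
  obtain ⟨y, hy⟩ := hρ x
  have h4 : (res.complex.d 1 0 ≫ F') y = ψ (ρ y) := by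
    rw [hF']; rfl
  have h5 : (res.complex.d 1 0 ≫ F') y = F'' ((ρ y : ↥(LinearMap.ker π)) : Fin n₀ → Λ) := by
    rw [hd10]; rfl
  rw [← hy, ← h5, h4]

end ExtLift

theorem stmt2 (K : Type u) [Field K] (Λ : Type u) [Ring Λ] [Algebra K Λ]
    [FiniteDimensional K Λ] [IsLocalRing Λ]
    (hJ : ∀ a ∈ (⊥ : Ideal Λ).jacobson, ∀ b ∈ (⊥ : Ideal Λ).jacobson, a * b = 0)
    (M : Type u) [AddCommGroup M] [Module Λ M] [Module.Finite Λ M]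
    (hind : IsIndecomposableModule Λ M) (htl : IsTorsionless Λ M)
    (hext : Subsingleton (ExtGrp Λ (ModuleCat.of Λ M) (ModuleCat.of Λ M) 1)) :
    Module.Projective Λ M := by
  classical
  obtain ⟨hMnt, hdec⟩ := hind
  obtain ⟨nf, f, hf⟩ := htl
  have hJ' : ∀ a b : Λ, ¬IsUnit a → ¬IsUnit b → a * b = 0 := fun a b ha hb =>
    hJ a (aux_mem_jacobson ha) b (aux_mem_jacobson hb)
  by_cases hA : ∃ (x : M) (i : Fin nf), IsUnit (f x i)
  · -- a coordinate functional is onto : M has Λ as a direct summand, hence M ≅ Λ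
    obtain ⟨x₀, i₀, hu⟩ := hA
    let p : M →ₗ[Λ] Λ := (LinearMap.proj i₀).comp f
    let x₁ : M := (↑hu.unit⁻¹ : Λ) • x₀
    have hpx₁ : p x₁ = 1 := by
      show (f ((↑hu.unit⁻¹ : Λ) • x₀)) i₀ = 1
      rw [map_smul]
      show (↑hu.unit⁻¹ : Λ) * f x₀ i₀ = 1
      exact hu.val_inv_mul
    let s : Λ →ₗ[Λ] M := LinearMap.toSpanSingleton Λ M x₁
    have hps : ∀ c : Λ, p (s c) = c := fun c => by
      show p (c • x₁) = c
      rw [map_smul, hpx₁, smul_eq_mul, mul_one]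
    have hcompl : IsCompl (LinearMap.ker p) (LinearMap.range s) := by
      constructor
      · rw [Submodule.disjoint_def]
        rintro z hzker ⟨c, rfl⟩
        have hc : c = 0 := by rw [← hps c]; exact LinearMap.mem_ker.1 hzker
        rw [hc, map_zero]
      · rw [codisjoint_iff]
        refine Submodule.eq_top_iff'.2 fun z => Submodule.mem_sup.2 ?_
        refine ⟨z - s (p z), ?_, s (p z), ⟨p z, rfl⟩, by abel⟩
        rw [LinearMap.mem_ker, map_sub, hps, sub_self]
    rcases hdec _ _ hcompl with hker0 | hrange0
    · have hinj : Function.Injective p := by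
        rw [← LinearMap.ker_eq_bot]; exact hker0
      have hsurj : Function.Surjective p := fun c => ⟨s c, hps c⟩
      exact Module.Projective.of_equiv (LinearEquiv.ofBijective p ⟨hinj, hsurj⟩).symm
    · exfalso
      have hs1 : s 1 ∈ LinearMap.range s := ⟨1, rfl⟩
      rw [hrange0, Submodule.mem_bot] at hs1
      have h1 : p (s 1) = 1 := hps 1
      rw [hs1, map_zero] at h1
      exact one_ne_zero h1.symm
  · -- all coordinates of all images are nonunits
    push_neg at hA
    have hMkill : ∀ a : Λ, ¬IsUnit a → ∀ x : M, a • x = 0 := by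
      intro a ha x
      apply hf
      rw [map_smul, map_zero]
      funext i
      show a * f x i = 0
      exact hJ' a (f x i) ha (hA x i)
    by_cases hB : ∃ a : Λ, a ≠ 0 ∧ ¬IsUnit a
    · exfalso
      obtain ⟨a, ha0, haU⟩ := hB
      obtain ⟨m₀, hm₀⟩ := exists_ne (0 : M)
      haveI hNoeth : IsNoetherianRing Λ :=
        isNoetherian_of_tower K (IsNoetherian.iff_fg.2 ‹FiniteDimensional K Λ›)
      have hPex : ∃ n, ∃ mm : Fin n → M, Submodule.span Λ (Set.range mm) = ⊤ := by
        obtain ⟨n, s, hs⟩ := Module.Finite.exists_fin (R := Λ) (M := M)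
        exact ⟨n, s, hs⟩
      set n₀ := Nat.find hPex with hn₀
      obtain ⟨m, hm⟩ : ∃ mm : Fin n₀ → M, Submodule.span Λ (Set.range mm) = ⊤ :=
        Nat.find_spec hPex
      let π : (Fin n₀ → Λ) →ₗ[Λ] M := Fintype.linearCombination Λ m
      have hπs : Function.Surjective π :=
        LinearMap.range_eq_top.1 (by rw [show LinearMap.range π = _ from Fintype.range_linearCombination Λ m, hm])
      have hπdef : ∀ x, π x = ∑ i, x i • m i := fun x => rfl
      have hKer : ∀ x ∈ LinearMap.ker π, ∀ j, ¬IsUnit (x j) := by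
        intro x hx j hUnit
        have hn0 : n₀ ≠ 0 := fun h => (h ▸ j).elim0
        obtain ⟨n', hn'⟩ := Nat.exists_eq_succ_of_ne_zero hn0
        let m₂ : Fin (n' + 1) → M := fun i => m (Fin.cast hn'.symm i)
        let x₂ : Fin (n' + 1) → Λ := fun i => x (Fin.cast hn'.symm i)
        let j₂ : Fin (n' + 1) := Fin.cast hn' j
        have hm₂ : Submodule.span Λ (Set.range m₂) = ⊤ := by
          have hre : Set.range m₂ = Set.range m := by
            ext z
            constructor
            · rintro ⟨i, rfl⟩; exact ⟨_, rfl⟩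
            · rintro ⟨i, rfl⟩; exact ⟨Fin.cast hn' i, rfl⟩
          rw [hre, hm]
        have hx₂ : ∑ i, x₂ i • m₂ i = 0 := by
          have hsum : ∑ i, x i • m i = ∑ i, x₂ i • m₂ i :=
            Fintype.sum_equiv (finCongr hn') _ _ (fun i => rfl)
          rw [← hsum]
          rw [← hπdef x]
          exact hx
        have hj₂ : IsUnit (x₂ j₂) := hUnit
        have hdrop := aux_span_drop m₂ hm₂ hx₂ hj₂
        exact Nat.find_min hPex (by omega : n' < n₀) ⟨m₂ ∘ j₂.succAbove, hdrop⟩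
      haveI : IsNoetherian Λ ↥(LinearMap.ker π) := isNoetherian_submodule' _
      haveI : Module.Finite Λ ↥(LinearMap.ker π) := ⟨IsNoetherian.noetherian ⊤⟩
      obtain ⟨n₁, kg, hkg⟩ := Module.Finite.exists_fin (R := Λ) (M := ↥(LinearMap.ker π))
      let ρ : (Fin n₁ → Λ) →ₗ[Λ] ↥(LinearMap.ker π) := Fintype.linearCombination Λ kg
      have hρs : Function.Surjective ρ :=
        LinearMap.range_eq_top.1 (by rw [show LinearMap.range ρ = _ from Fintype.range_linearCombination Λ kg, hkg])
      have hNkill : ∀ b : Λ, ¬IsUnit b → ∀ x : ↥(LinearMap.ker π), b • x = 0 := by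
        intro b hb x
        apply Subtype.ext
        show b • (x : Fin n₀ → Λ) = 0
        funext i
        show b * (x : Fin n₀ → Λ) i = 0
        exact hJ' b _ hb (hKer x x.2 i)
      have hn₀pos : 0 < n₀ := by
        by_contra hpos
        have h0 : n₀ = 0 := by omega
        haveI : IsEmpty (Fin n₀) := h0 ▸ inferInstanceAs (IsEmpty (Fin 0))
        rw [Set.range_eq_empty m, Submodule.span_empty] at hm
        obtain ⟨z₁, z₂, hz⟩ := hMnt
        apply hz
        have e₁ : z₁ ∈ (⊥ : Submodule Λ M) := hm ▸ Submodule.mem_top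
        have e₂ : z₂ ∈ (⊥ : Submodule Λ M) := hm ▸ Submodule.mem_top
        rw [(Submodule.mem_bot Λ).1 e₁, (Submodule.mem_bot Λ).1 e₂]
      let i₀ : Fin n₀ := ⟨0, hn₀pos⟩
      let sing : Fin n₀ → Λ := Pi.single i₀ (1 : Λ)
      let v : Fin n₀ → Λ := a • sing
      have hπsingle : π sing = m i₀ := by
        rw [show π sing = _ from Fintype.linearCombination_apply_single Λ m i₀ 1]
        rw [one_smul]
      have hvmem : v ∈ LinearMap.ker π := by
        rw [LinearMap.mem_ker]
        show π (a • sing) = 0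
        rw [map_smul, hπsingle]
        exact hMkill a haU _
      have hvne : (⟨v, hvmem⟩ : ↥(LinearMap.ker π)) ≠ 0 := by
        intro h
        apply ha0
        have hv0 : v = 0 := congrArg Subtype.val h
        have : v i₀ = a := by
          show (a • sing) i₀ = a
          rw [Pi.smul_apply]
          rw [show sing i₀ = 1 from Pi.single_eq_same i₀ 1]
          rw [smul_eq_mul, mul_one]
        rw [← this, hv0]
        rfl
      obtain ⟨ψ, hψ⟩ := aux_exists_functional hNkill hMkill (⟨v, hvmem⟩ : ↥(LinearMap.ker π)) hvne m₀
      obtain ⟨F, hF⟩ := ext1_lift π hπs ρ hρs hext ψ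
      have h1 : F v = m₀ := by
        have := hF ⟨v, hvmem⟩
        rw [this, hψ]
      have h2 : F v = 0 := by
        show F (a • sing) = 0
        rw [map_smul]
        exact hMkill a haU _
      exact hm₀ (by rw [← h1, h2])
    · exfalso
      push_neg at hB
      obtain ⟨z₁, z₂, hz⟩ := hMnt
      apply hz
      have hall : ∀ x : M, x = 0 := by
        intro x
        apply hf
        rw [map_zero]
        funext i
        by_contra h0
        exact hA x i (hB _ h0)
      rw [hall z₁, hall z₂]
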